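/- For 1 < k < n, the set of extreme points of the unit ball of the vector k-norm ‖x‖_{(k)} = Σ_{i=1}^k |x|_i^↓ on ℝⁿ equals (1/k)·{−1,1}ⁿ ∪ {±e_i : 1 ≤ i ≤ n}. -/

import Mathlib

open Finset

/-- `dsort x i` is the `i`-th entry of the non-increasing rearrangement of `|x|`. -/
noncomputable def dsort {n : ℕ} (x : Fin n → ℝ) : Fin n → ℝ :=
  fun i => |x (Tuple.sort (fun j => |x j|) i.rev)|

/-- The vector `k`-norm `‖x‖_{(k)} = Σ_{i<k} |x|_i^↓`. -/
noncomputable def kNormU {n : ℕ} (k : ℕ) (x : Fin n → ℝ) : ℝ :=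
  ∑ i : Fin n, if (i : ℕ) < k then dsort x i else 0

namespace KNormAux
variable {n : ℕ}
noncomputable def sperm {n : ℕ} (x : Fin n → ℝ) : Equiv.Perm (Fin n) :=
  (Fin.revPerm).trans (Tuple.sort (fun j => |x j|))
lemma dsort_eq (x : Fin n → ℝ) (i : Fin n) : dsort x i = |x (sperm x i)| := rfl
lemma dsort_nonneg (x : Fin n → ℝ) (i : Fin n) : 0 ≤ dsort x i := abs_nonneg _
lemma dsort_antitone (x : Fin n → ℝ) : Antitone (dsort x) := by
  intro i j hij
  have h := Tuple.monotone_sort (fun j => |x j|) (Fin.rev_le_rev.2 hij)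
  simpa [dsort, Function.comp] using h
lemma kNormU_eq_filter (k : ℕ) (x : Fin n → ℝ) :
    kNormU k x = ∑ i ∈ univ.filter (fun i : Fin n => (i : ℕ) < k), dsort x i := by
  rw [kNormU, Finset.sum_filter]
lemma card_filter_lt (k : ℕ) (hkn : k ≤ n) :
    (univ.filter (fun i : Fin n => (i : ℕ) < k)).card = k := by
  have : univ.filter (fun i : Fin n => (i : ℕ) < k) = Finset.map (Fin.castLEEmb hkn) univ := by
    ext i
    simp only [mem_filter, mem_univ, true_and, Finset.mem_map]
    constructor
    · intro h
      refine ⟨⟨i, h⟩, ?_⟩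
      rfl
    · rintro ⟨j, rfl⟩
      exact j.2
  rw [this, Finset.card_map, Finset.card_univ, Fintype.card_fin]

lemma core (k : ℕ) (hk1 : 1 ≤ k) (hkn : k ≤ n) (x w : Fin n → ℝ)
    (hw0 : ∀ i, 0 ≤ w i) (hw1 : ∀ i, w i ≤ 1) (hws : ∑ i, w i ≤ (k : ℝ)) :
    ∑ i, w i * |x i| ≤ kNormU k x := by
  have hkn' : k - 1 < n := lt_of_lt_of_le (Nat.sub_lt (by omega) one_pos) hkn
  set km : Fin n := ⟨k - 1, hkn'⟩ with hkm
  set t := dsort x km with ht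
  have ht0 : 0 ≤ t := dsort_nonneg x km
  have key : ∑ i, max (|x i| - t) 0 = kNormU k x - k * t := by
    have hperm : ∑ i, max (|x i| - t) 0 = ∑ i, max (dsort x i - t) 0 := by
      simp_rw [dsort_eq]
      exact (Equiv.sum_comp (sperm x) fun j => max (|x j| - t) 0).symm
    rw [hperm, ← Finset.sum_filter_add_sum_filter_not univ (fun i : Fin n => (i : ℕ) < k)]
    have h2 : ∑ i ∈ univ.filter (fun i : Fin n => ¬ (i : ℕ) < k), max (dsort x i - t) 0 = 0 := by
      refine Finset.sum_eq_zero fun i hi => ?_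
      simp only [mem_filter, mem_univ, true_and, not_lt] at hi
      have : dsort x i ≤ t := dsort_antitone x (show km ≤ i by
        simp only [Fin.le_def, hkm]; omega)
      simp [max_eq_right, sub_nonpos.2 this]
    have h1 : ∑ i ∈ univ.filter (fun i : Fin n => (i : ℕ) < k), max (dsort x i - t) 0
        = ∑ i ∈ univ.filter (fun i : Fin n => (i : ℕ) < k), (dsort x i - t) := by
      refine Finset.sum_congr rfl fun i hi => ?_
      simp only [mem_filter, mem_univ, true_and] at hi
      have : t ≤ dsort x i := dsort_antitone x (show i ≤ km by
        simp only [Fin.le_def, hkm]; omega)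
      simp [max_eq_left, sub_nonneg.2 this]
    rw [h2, h1, add_zero, Finset.sum_sub_distrib, Finset.sum_const, card_filter_lt k hkn,
      nsmul_eq_mul, kNormU_eq_filter]
  calc ∑ i, w i * |x i|
      ≤ ∑ i, (w i * max (|x i| - t) 0 + w i * t) := by
        refine Finset.sum_le_sum fun i _ => ?_
        have h := le_max_left (|x i| - t) 0
        nlinarith [hw0 i]
    _ = ∑ i, w i * max (|x i| - t) 0 + (∑ i, w i) * t := by
        rw [Finset.sum_add_distrib, Finset.sum_mul]
    _ ≤ ∑ i, max (|x i| - t) 0 + (k : ℝ) * t := by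
        refine add_le_add (Finset.sum_le_sum fun i _ => ?_) (mul_le_mul_of_nonneg_right hws ht0)
        nlinarith [hw1 i, hw0 i, le_max_right (|x i| - t) 0]
    _ = kNormU k x := by rw [key]; ring

lemma sum_subset_le (k : ℕ) (hk1 : 1 ≤ k) (hkn : k ≤ n) (x : Fin n → ℝ)
    (T : Finset (Fin n)) (hT : T.card = k) :
    ∑ i ∈ T, |x i| ≤ kNormU k x := by
  have h := core k hk1 hkn x (fun i => if i ∈ T then 1 else 0)
    (fun i => by positivity) (fun i => by by_cases hi : i ∈ T <;> simp [hi])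
    (by simp [Finset.sum_ite_mem, hT])
  calc ∑ i ∈ T, |x i| = ∑ i, (if i ∈ T then 1 else 0) * |x i| := by
        simp [ite_mul, Finset.sum_ite_mem]
    _ ≤ kNormU k x := h

lemma exists_topset (k : ℕ) (hkn : k ≤ n) (x : Fin n → ℝ) :
    ∃ T : Finset (Fin n), T.card = k ∧ kNormU k x = ∑ i ∈ T, |x i| := by
  refine ⟨Finset.image (sperm x) (univ.filter fun i : Fin n => (i : ℕ) < k), ?_, ?_⟩
  · rw [Finset.card_image_of_injective _ (sperm x).injective, card_filter_lt k hkn]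
  · rw [kNormU_eq_filter, Finset.sum_image (fun a _ b _ h => (sperm x).injective h)]
    simp [dsort_eq]

lemma sum_dsort (x : Fin n → ℝ) : ∑ i, dsort x i = ∑ i, |x i| := by
  simp_rw [dsort_eq]
  exact Equiv.sum_comp (sperm x) (fun i => |x i|)

lemma kNormU_le_sum_abs (k : ℕ) (x : Fin n → ℝ) : kNormU k x ≤ ∑ i, |x i| := by
  rw [← sum_dsort, kNormU]
  refine Finset.sum_le_sum fun i _ => ?_
  split
  · exact le_rfl
  · exact dsort_nonneg x i

lemma kNormU_sign (k : ℕ) (hk1 : 1 ≤ k) (hkn : k ≤ n) (ε : Fin n → ℝ)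
    (hε : ∀ i, ε i = 1 ∨ ε i = -1) : kNormU k (fun i => ε i / k) ≤ 1 := by
  have hk0 : (k : ℝ) ≠ 0 := by positivity
  have habs : ∀ i, |ε i / (k : ℝ)| = 1 / k := by
    intro i; rcases hε i with h | h <;> simp [h, abs_div, abs_of_nonneg (by positivity : (0:ℝ) ≤ (k:ℝ))]
  have hds : ∀ i, dsort (fun i => ε i / (k : ℝ)) i = 1 / k := fun i => by
    rw [dsort_eq]; exact habs _
  rw [kNormU_eq_filter, Finset.sum_congr rfl fun i _ => hds i, Finset.sum_const,
    card_filter_lt k hkn, nsmul_eq_mul, mul_one_div, div_self hk0]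

lemma kNormU_single (k : ℕ) (x : Fin n → ℝ) (i : Fin n)
    (h : ∀ j, |x j| = if j = i then 1 else 0) : kNormU k x ≤ 1 := by
  calc kNormU k x ≤ ∑ j, |x j| := kNormU_le_sum_abs k x
    _ = 1 := by simp [h]

lemma convex_ball (k : ℕ) (hk1 : 1 ≤ k) (hkn : k ≤ n) :
    Convex ℝ {x : Fin n → ℝ | kNormU k x ≤ 1} := by
  intro x hx y hy a b ha hb hab
  obtain ⟨T, hTc, hTs⟩ := exists_topset k hkn (a • x + b • y)
  simp only [Set.mem_setOf_eq] at *
  rw [hTs]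
  calc ∑ i ∈ T, |(a • x + b • y) i| ≤ ∑ i ∈ T, (a * |x i| + b * |y i|) := by
        refine Finset.sum_le_sum fun i _ => ?_
        simp only [Pi.add_apply, Pi.smul_apply, smul_eq_mul]
        calc |a * x i + b * y i| ≤ |a * x i| + |b * y i| := abs_add_le _ _
          _ = a * |x i| + b * |y i| := by
              rw [abs_mul, abs_mul, abs_of_nonneg ha, abs_of_nonneg hb]
    _ = a * ∑ i ∈ T, |x i| + b * ∑ i ∈ T, |y i| := by
        rw [Finset.sum_add_distrib, Finset.mul_sum, Finset.mul_sum]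
    _ ≤ a * 1 + b * 1 := by
        refine add_le_add (mul_le_mul_of_nonneg_left ?_ ha) (mul_le_mul_of_nonneg_left ?_ hb)
        · exact (sum_subset_le k hk1 hkn x T hTc).trans hx
        · exact (sum_subset_le k hk1 hkn y T hTc).trans hy
    _ = 1 := by rw [mul_one, mul_one, hab]

def Vset (n k : ℕ) : Set (Fin n → ℝ) :=
  {x : Fin n → ℝ | ∃ ε : Fin n → ℝ,
      (∀ i, ε i = 1 ∨ ε i = -1) ∧ x = fun i => ε i / (k : ℝ)} ∪
  {x : Fin n → ℝ | ∃ i : Fin n, x = Pi.single i (1 : ℝ) ∨ x = -Pi.single i (1 : ℝ)}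

lemma finite_V (k : ℕ) : (Vset n k).Finite := by
  apply Set.Finite.union
  · have hfin : ({ε : Fin n → ℝ | ∀ i, ε i ∈ ({1, -1} : Set ℝ)}).Finite :=
      Set.Finite.pi' fun i => (Set.finite_singleton (-1 : ℝ)).insert 1
    refine Set.Finite.subset (hfin.image (fun ε => fun i => ε i / (k : ℝ))) ?_
    rintro x ⟨ε, hε, rfl⟩
    exact ⟨ε, fun i => by rcases hε i with h | h <;> simp [h], rfl⟩
  · refine Set.Finite.subset (Set.finite_iUnion
      (fun i : Fin n => (Set.finite_singleton (-Pi.single i (1:ℝ))).insert (Pi.single i 1))) ?_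
    rintro x ⟨i, h | h⟩ <;> exact Set.mem_iUnion.2 ⟨i, by simp [h]⟩

lemma V_subset_ball (k : ℕ) (hk1 : 1 ≤ k) (hkn : k ≤ n) :
    Vset n k ⊆ {x : Fin n → ℝ | kNormU k x ≤ 1} := by
  rintro x (⟨ε, hε, rfl⟩ | ⟨i, h | h⟩)
  · exact kNormU_sign k hk1 hkn ε hε
  · subst h
    exact kNormU_single k _ i fun j => by
      by_cases hj : j = i <;> simp [Pi.single_apply, hj]
  · subst h
    exact kNormU_single k _ i fun j => by
      by_cases hj : j = i <;> simp [Pi.single_apply, hj]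


lemma f_repr (f : (Fin n → ℝ) →L[ℝ] ℝ) (z : Fin n → ℝ) :
    f z = ∑ i, z i * f (Pi.single i 1) := by
  conv_lhs => rw [← Finset.univ_sum_single z]
  rw [map_sum]
  refine Finset.sum_congr rfl fun i _ => ?_
  have h : Pi.single i (z i) = z i • (Pi.single i (1 : ℝ) : Fin n → ℝ) := by
    ext j; by_cases hj : j = i <;> simp [Pi.single_apply, hj]
  rw [h, map_smul, smul_eq_mul]

lemma ball_subset_hull (k : ℕ) (hk1 : 1 ≤ k) (hkn : k ≤ n) (hn : 0 < n) :
    {x : Fin n → ℝ | kNormU k x ≤ 1} ⊆ convexHull ℝ (Vset n k) := by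
  intro x hx
  by_contra hxV
  obtain ⟨f, u, hfu, hux⟩ := geometric_hahn_banach_closed_point
    (convex_convexHull ℝ _) (((finite_V k).isCompact_convexHull ℝ).isClosed) hxV
  have hk0 : (0 : ℝ) < (k : ℝ) := by positivity
  set y : Fin n → ℝ := fun i => f (Pi.single i 1) with hy
  have hmem : ∀ v ∈ Vset n k, f v < u := fun v hv => hfu v (subset_convexHull ℝ _ hv)
  have hyu : ∀ i, |y i| < u := by
    intro i
    have h1 : f (Pi.single i 1) < u := hmem _ (Or.inr ⟨i, Or.inl rfl⟩)
    have h2 : f (-Pi.single i 1) < u := hmem _ (Or.inr ⟨i, Or.inr rfl⟩)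
    rw [map_neg] at h2
    rw [abs_lt]
    refine ⟨?_, h1⟩
    simp only [hy]
    linarith
  have hupos : 0 < u := lt_of_le_of_lt (abs_nonneg _) (hyu ⟨0, hn⟩)
  have hy1 : ∑ i, |y i| ≤ (k : ℝ) * u := by
    set ε : Fin n → ℝ := fun i => if 0 ≤ y i then 1 else -1 with hε
    have hεs : ∀ i, ε i = 1 ∨ ε i = -1 := fun i => by
      by_cases h : 0 ≤ y i <;> simp [hε, h]
    have hv : f (fun i => ε i / k) < u := hmem _ (Or.inl ⟨ε, hεs, rfl⟩)
    rw [f_repr] at hv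
    have hsum : ∑ i, (ε i / (k : ℝ)) * f (Pi.single i 1) = (∑ i, |y i|) / k := by
      rw [Finset.sum_div]
      refine Finset.sum_congr rfl fun i _ => ?_
      rw [div_mul_eq_mul_div]
      congr 1
      by_cases h : 0 ≤ y i
      · simp only [hy] at h; simp [hε, h, abs_of_nonneg h, hy]
      · push_neg at h
        simp only [hy] at h; simp [hε, not_le.2 h, abs_of_neg h, hy]
    rw [hsum, div_lt_iff₀ hk0] at hv
    nlinarith
  have hcore := core k hk1 hkn x (fun i => |y i| / u)
    (fun i => by positivity)
    (fun i => by rw [div_le_one hupos]; exact (hyu i).le)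
    (by rw [← Finset.sum_div, div_le_iff₀ hupos]; exact hy1.trans_eq (by ring))
  have hfx : f x ≤ u := by
    rw [f_repr]
    calc ∑ i, x i * y i ≤ ∑ i, |y i| * |x i| := by
          refine Finset.sum_le_sum fun i _ => ?_
          calc x i * y i ≤ |x i * y i| := le_abs_self _
            _ = |y i| * |x i| := by rw [abs_mul, mul_comm]
      _ = u * ∑ i, (|y i| / u) * |x i| := by
          rw [Finset.mul_sum]
          refine Finset.sum_congr rfl fun i _ => ?_
          field_simp
      _ ≤ u * 1 := by
          refine mul_le_mul_of_nonneg_left (hcore.trans hx) hupos.le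
      _ = u := mul_one u
  linarith

lemma ball_eq_hull (k : ℕ) (hk1 : 1 ≤ k) (hkn : k ≤ n) (hn : 0 < n) :
    {x : Fin n → ℝ | kNormU k x ≤ 1} = convexHull ℝ (Vset n k) :=
  le_antisymm (ball_subset_hull k hk1 hkn hn)
    (convexHull_min (V_subset_ball k hk1 hkn) (convex_ball k hk1 hkn))


lemma seg_one {a b p q : ℝ} (ha : 0 < a) (hb : 0 < b) (hab : a + b = 1)
    (hp : p ≤ 1) (hq : q ≤ 1) (h : a * p + b * q = 1) : p = 1 ∧ q = 1 := by
  constructor <;> nlinarith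

lemma func_le (k : ℕ) (hk1 : 1 ≤ k) (hkn : k ≤ n) {x : Fin n → ℝ} (hx : kNormU k x ≤ 1)
    (T : Finset (Fin n)) (hT : T.card = k) (ε : Fin n → ℝ)
    (hε : ∀ i, ε i = 1 ∨ ε i = -1) : ∑ i ∈ T, ε i * x i ≤ 1 := by
  calc ∑ i ∈ T, ε i * x i ≤ ∑ i ∈ T, |x i| := by
        refine Finset.sum_le_sum fun i _ => ?_
        exact (le_abs_self _).trans_eq (by rw [abs_mul]; rcases hε i with h | h <;> simp [h])
    _ ≤ kNormU k x := sum_subset_le k hk1 hkn x T hT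
    _ ≤ 1 := hx

lemma face (k : ℕ) (hk1 : 1 ≤ k) (hkn : k ≤ n) {x₁ x₂ : Fin n → ℝ}
    (h1 : kNormU k x₁ ≤ 1) (h2 : kNormU k x₂ ≤ 1)
    {a b : ℝ} (ha : 0 < a) (hb : 0 < b) (hab : a + b = 1)
    (T : Finset (Fin n)) (hT : T.card = k) (ε : Fin n → ℝ)
    (hε : ∀ i, ε i = 1 ∨ ε i = -1)
    (hv : ∑ i ∈ T, ε i * (a * x₁ i + b * x₂ i) = 1) :
    ∑ i ∈ T, ε i * x₁ i = 1 ∧ ∑ i ∈ T, ε i * x₂ i = 1 := by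
  have hcomb : a * (∑ i ∈ T, ε i * x₁ i) + b * (∑ i ∈ T, ε i * x₂ i) = 1 := by
    rw [Finset.mul_sum, Finset.mul_sum, ← Finset.sum_add_distrib, ← hv]
    exact Finset.sum_congr rfl fun i _ => by ring
  exact seg_one ha hb hab (func_le k hk1 hkn h1 T hT ε hε)
    (func_le k hk1 hkn h2 T hT ε hε) hcomb

lemma const_of_faces (k : ℕ) (hk1 : 1 ≤ k) (hkn : k < n) (g : Fin n → ℝ)
    (hg : ∀ T : Finset (Fin n), T.card = k → ∑ i ∈ T, g i = 1) :
    ∀ i, g i = 1 / k := by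
  have hk0 : (0 : ℝ) < (k : ℝ) := by positivity
  have hconst : ∀ i j : Fin n, g i = g j := by
    intro i j
    rcases eq_or_ne i j with rfl | hij
    · rfl
    obtain ⟨S, hS, hScard⟩ := Finset.exists_subset_card_eq (s := univ \ {i, j}) (n := k - 1)
      (by rw [Finset.card_sdiff_of_subset (subset_univ _), card_univ, Fintype.card_fin,
          Finset.card_pair hij]; omega)
    have hiS : i ∉ S := fun h => by simpa using hS h
    have hjS : j ∉ S := fun h => by simpa using hS h
    have hTi := hg (insert i S) (by rw [Finset.card_insert_of_notMem hiS, hScard]; omega)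
    have hTj := hg (insert j S) (by rw [Finset.card_insert_of_notMem hjS, hScard]; omega)
    rw [Finset.sum_insert hiS] at hTi
    rw [Finset.sum_insert hjS] at hTj
    linarith
  intro i
  obtain ⟨T, -, hT⟩ := Finset.exists_subset_card_eq (s := (univ : Finset (Fin n))) (n := k)
    (by rw [card_univ, Fintype.card_fin]; omega)
  have h1 := hg T hT
  rw [Finset.sum_congr rfl (fun j _ => hconst j i), Finset.sum_const, hT, nsmul_eq_mul] at h1
  field_simp
  linarith

lemma sign_determines (k : ℕ) (hk1 : 1 ≤ k) (hkn : k < n) (ε : Fin n → ℝ)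
    (hε : ∀ i, ε i = 1 ∨ ε i = -1) (x : Fin n → ℝ)
    (hg : ∀ T : Finset (Fin n), T.card = k → ∑ i ∈ T, ε i * x i = 1) :
    x = fun i => ε i / (k : ℝ) := by
  have h := const_of_faces k hk1 hkn (fun i => ε i * x i) hg
  funext i
  have hi : ε i * x i = 1 / (k : ℝ) := h i
  rcases hε i with hs | hs <;> simp only [hs] at hi ⊢
  · linarith
  · rw [neg_div]; linarith

lemma single_determines (k : ℕ) (hk : 1 < k) (hkn : k < n) (i : Fin n) (s : ℝ)
    (hs : s = 1 ∨ s = -1) (x : Fin n → ℝ)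
    (hgood : ∀ S : Finset (Fin n), S ⊆ univ \ {i} → S.card = k - 1 →
      ∀ ε : Fin n → ℝ, (∀ l, ε l = 1 ∨ ε l = -1) → ε i = s →
        ∑ l ∈ insert i S, ε l * x l = 1) :
    x = s • (Pi.single i (1 : ℝ) : Fin n → ℝ) := by
  have hzero : ∀ j, j ≠ i → x j = 0 := by
    intro j hj
    obtain ⟨S₀, hS₀, hS₀card⟩ := Finset.exists_subset_card_eq (s := univ \ {i, j}) (n := k - 2)
      (by rw [Finset.card_sdiff_of_subset (subset_univ _), card_univ, Fintype.card_fin,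
          Finset.card_pair (Ne.symm hj)]; omega)
    have hiS₀ : i ∉ S₀ := fun h => by simpa using hS₀ h
    have hjS₀ : j ∉ S₀ := fun h => by simpa using hS₀ h
    set S : Finset (Fin n) := insert j S₀ with hSdef
    have hSsub : S ⊆ univ \ {i} := by
      intro l hl
      rcases Finset.mem_insert.1 hl with rfl | hl
      · simp [hj]
      · have := hS₀ hl
        simp only [Finset.mem_sdiff, Finset.mem_univ, true_and, Finset.mem_insert,
          Finset.mem_singleton] at this ⊢
        tauto
    have hScard : S.card = k - 1 := by
      rw [hSdef, Finset.card_insert_of_notMem hjS₀, hS₀card]; omega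
    have hiS : i ∉ S := fun h => by simpa using hSsub h
    have hjS : j ∈ S := Finset.mem_insert_self j S₀
    set εp : Fin n → ℝ := fun l => if l = i then s else 1 with hεp
    set εm : Fin n → ℝ := fun l => if l = j then -1 else if l = i then s else 1 with hεm
    have hp := hgood S hSsub hScard εp
      (fun l => by by_cases h : l = i <;> simp [hεp, h, hs]) (by simp [hεp])
    have hm := hgood S hSsub hScard εm
      (fun l => by
        by_cases h : l = j
        · subst h; simp [hεm]
        · by_cases h' : l = i
          · subst h'
            simp only [hεm, if_neg (Ne.symm hj), if_pos rfl]
            exact hs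
          · simp [hεm, h, h'])
      (by simp [hεm, Ne.symm hj])
    have hdiff : ∑ l ∈ insert i S, (εp l - εm l) * x l = 0 := by
      calc ∑ l ∈ insert i S, (εp l - εm l) * x l
          = ∑ l ∈ insert i S, (εp l * x l - εm l * x l) :=
            Finset.sum_congr rfl fun l _ => by ring
        _ = 1 - 1 := by rw [Finset.sum_sub_distrib, hp, hm]
        _ = 0 := by ring
    have hterm : ∀ l, εp l - εm l = if l = j then 2 else 0 := by
      intro l
      by_cases h : l = j
      · subst h
        simp [hεp, hεm, hj]
        norm_num
      · simp [hεp, hεm, h]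
    rw [Finset.sum_congr rfl (fun l _ => by rw [hterm l, ite_mul, zero_mul])] at hdiff
    rw [Finset.sum_ite_eq' (insert i S) j (fun l => 2 * x l)] at hdiff
    rw [if_pos (Finset.mem_insert_of_mem hjS)] at hdiff
    linarith
  obtain ⟨S, hSsub, hScard⟩ := Finset.exists_subset_card_eq (s := univ \ {i}) (n := k - 1)
    (by rw [Finset.card_sdiff_of_subset (subset_univ _), card_univ, Fintype.card_fin,
        Finset.card_singleton]; omega)
  have hiS : i ∉ S := fun h => by simpa using hSsub h
  have h := hgood S hSsub hScard (fun l => if l = i then s else 1)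
    (fun l => by by_cases hl : l = i <;> simp [hl, hs]) (by simp)
  rw [Finset.sum_insert hiS] at h
  have hS0 : ∑ l ∈ S, (if l = i then s else (1:ℝ)) * x l = 0 := by
    refine Finset.sum_eq_zero fun l hl => ?_
    have hl' : l ≠ i := fun hli => hiS (hli ▸ hl)
    rw [hzero l hl', mul_zero]
  rw [hS0, add_zero] at h
  have hxi : s * x i = 1 := by simpa using h
  funext j
  by_cases hji : j = i
  · subst hji
    have : (s • (Pi.single j (1:ℝ) : Fin n → ℝ)) j = s := by simp
    rw [this]
    rcases hs with rfl | rfl <;> linarith [hxi]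
  · rw [hzero j hji]
    simp [Pi.single_apply, hji]

lemma sign_extreme (k : ℕ) (hk : 1 < k) (hkn : k < n) (ε : Fin n → ℝ)
    (hε : ∀ i, ε i = 1 ∨ ε i = -1) :
    (fun i => ε i / (k : ℝ)) ∈ Set.extremePoints ℝ {x : Fin n → ℝ | kNormU k x ≤ 1} := by
  have hk0 : (0 : ℝ) < (k : ℝ) := by positivity
  constructor
  · exact kNormU_sign k (by omega) hkn.le ε hε
  rintro x₁ hx₁ x₂ hx₂ ⟨a, b, ha, hb, hab, hseg⟩
  have hvT : ∀ T : Finset (Fin n), T.card = k →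
      ∑ i ∈ T, ε i * (a * x₁ i + b * x₂ i) = 1 := by
    intro T hT
    have heq : ∀ i, a * x₁ i + b * x₂ i = ε i / k := by
      intro i
      have := congrFun hseg i
      simpa using this
    have heps : ∀ i, ε i * (ε i / (k : ℝ)) = 1 / k := fun i => by
      rcases hε i with h | h <;> rw [h] <;> ring
    rw [Finset.sum_congr rfl fun i _ => by rw [heq i, heps i], Finset.sum_const, hT,
      nsmul_eq_mul, mul_one_div, div_self hk0.ne']
  have hf1 : ∀ T : Finset (Fin n), T.card = k → ∑ i ∈ T, ε i * x₁ i = 1 :=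
    fun T hT => (face k (by omega) hkn.le hx₁ hx₂ ha hb hab T hT ε hε (hvT T hT)).1
  have hf2 : ∀ T : Finset (Fin n), T.card = k → ∑ i ∈ T, ε i * x₂ i = 1 :=
    fun T hT => (face k (by omega) hkn.le hx₁ hx₂ ha hb hab T hT ε hε (hvT T hT)).2
  exact And.left ⟨sign_determines k (by omega) hkn ε hε x₁ hf1,
    sign_determines k (by omega) hkn ε hε x₂ hf2⟩

lemma single_extreme (k : ℕ) (hk : 1 < k) (hkn : k < n) (i : Fin n) (s : ℝ)
    (hs : s = 1 ∨ s = -1) :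
    (s • (Pi.single i (1 : ℝ) : Fin n → ℝ)) ∈
      Set.extremePoints ℝ {x : Fin n → ℝ | kNormU k x ≤ 1} := by
  have habs : ∀ j, |(s • (Pi.single i (1:ℝ) : Fin n → ℝ)) j| = if j = i then 1 else 0 := by
    intro j
    rcases hs with rfl | rfl <;> by_cases hj : j = i <;> simp [Pi.single_apply, hj]
  constructor
  · exact kNormU_single k _ i habs
  rintro x₁ hx₁ x₂ hx₂ ⟨a, b, ha, hb, hab, hseg⟩
  have hval : ∀ j, a * x₁ j + b * x₂ j = s * (if j = i then 1 else 0) := by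
    intro j
    have := congrFun hseg j
    simpa [Pi.single_apply] using this
  have hgood : ∀ S : Finset (Fin n), S ⊆ univ \ {i} → S.card = k - 1 →
      ∀ ε : Fin n → ℝ, (∀ l, ε l = 1 ∨ ε l = -1) → ε i = s →
      (∑ l ∈ insert i S, ε l * x₁ l = 1 ∧ ∑ l ∈ insert i S, ε l * x₂ l = 1) := by
    intro S hSsub hScard ε hεs hεi
    have hiS : i ∉ S := fun h => by simpa using hSsub h
    have hT : (insert i S).card = k := by
      rw [Finset.card_insert_of_notMem hiS, hScard]; omega
    refine face k (by omega) hkn.le hx₁ hx₂ ha hb hab _ hT ε hεs ?_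
    rw [Finset.sum_congr rfl fun l _ => by rw [hval l], Finset.sum_insert hiS]
    have hS0 : ∑ l ∈ S, ε l * (s * (if l = i then (1:ℝ) else 0)) = 0 := by
      refine Finset.sum_eq_zero fun l hl => ?_
      have : l ≠ i := fun h => hiS (h ▸ hl)
      simp [this]
    rw [hS0, add_zero, if_pos rfl, hεi]
    rcases hs with rfl | rfl <;> norm_num
  exact And.left ⟨single_determines k hk hkn i s hs x₁
      (fun S h1 h2 ε h3 h4 => (hgood S h1 h2 ε h3 h4).1),
    single_determines k hk hkn i s hs x₂
      (fun S h1 h2 ε h3 h4 => (hgood S h1 h2 ε h3 h4).2)⟩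

end KNormAux

/-- (2.1): for `1 < k < n` the extreme points of the unit ball of the vector
`k`-norm are exactly `(1/k)·{-1,1}ⁿ ∪ {±e_i}`. -/
theorem extreme_points_k_norm_ball {n k : ℕ} (hk : 1 < k) (hkn : k < n) :
    Set.extremePoints ℝ {x : Fin n → ℝ | kNormU k x ≤ 1} =
      {x : Fin n → ℝ | ∃ ε : Fin n → ℝ,
          (∀ i, ε i = 1 ∨ ε i = -1) ∧ x = fun i => ε i / (k : ℝ)} ∪
      {x : Fin n → ℝ | ∃ i : Fin n,
          x = Pi.single i (1 : ℝ) ∨ x = -Pi.single i (1 : ℝ)} := by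
  apply Set.Subset.antisymm
  · intro x hx
    rw [KNormAux.ball_eq_hull k (by omega) hkn.le (by omega)] at hx
    exact extremePoints_convexHull_subset hx
  · rintro x (⟨ε, hε, rfl⟩ | ⟨i, rfl | rfl⟩)
    · exact KNormAux.sign_extreme k hk hkn ε hε
    · have := KNormAux.single_extreme k hk hkn i 1 (Or.inl rfl)
      simpa using this
    · have := KNormAux.single_extreme k hk hkn i (-1) (Or.inr rfl)
      simpa using this
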